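/- arXiv:0801.2477 — 6 statements merged into one kernel-verified Lean document; each statement's English description precedes it below -/
import Mathlib

section
/- Let 0 < ε < 1/4, let X be a compact Hausdorff space, and let φ be a positive continuous linear functional on C(X) of norm 1 that is ε-disjointness preserving, represented by the regular Borel measure λ. Then for every Borel subset C of X, λ(C) does not lie in the open interval ((1 − √(1−4ε))/2, (1 + √(1−4ε))/2). -/
open MeasureTheory Real

/-- Integral of a continuous function against a signed measure (via Jordan decomposition). -/
noncomputable def sInt {X : Type*} [MeasurableSpace X] (s : SignedMeasure X) (f : X → ℝ) : ℝ :=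
  ∫ x, f x ∂s.toJordanDecomposition.posPart - ∫ x, f x ∂s.toJordanDecomposition.negPart

/-- A continuous linear functional on `C(X)` is `ε`-disjointness preserving. -/
def IsEDP {X : Type*} [TopologicalSpace X] [CompactSpace X] (ε : ℝ)
    (φ : C(X, ℝ) →L[ℝ] ℝ) : Prop :=
  ∀ f g : C(X, ℝ), ‖f‖ = 1 → ‖g‖ = 1 → f * g = 0 → |φ f| * |φ g| ≤ ε

theorem stmt0 {X : Type*} [TopologicalSpace X] [CompactSpace X] [T2Space X]
    [MeasurableSpace X] [BorelSpace X]
    (ε : ℝ) (hε : 0 < ε) (hε' : ε < 1/4)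
    (φ : C(X, ℝ) →L[ℝ] ℝ) (hpos : ∀ f : C(X, ℝ), 0 ≤ f → 0 ≤ φ f)
    (hnorm : ‖φ‖ = 1) (hdp : IsEDP ε φ)
    (lam : Measure X) [IsFiniteMeasure lam] [lam.Regular]
    (hrep : ∀ f : C(X, ℝ), φ f = ∫ x, f x ∂lam)
    (C : Set X) (hC : MeasurableSet C) :
    (lam C).toReal ∉
      Set.Ioo ((1 - sqrt (1 - 4*ε))/2) ((1 + sqrt (1 - 4*ε))/2) := by
  set s := sqrt (1 - 4*ε) with hs_def
  have hs0 : 0 ≤ s := Real.sqrt_nonneg _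
  have hs2 : s ^ 2 = 1 - 4*ε := Real.sq_sqrt (by linarith)
  have hs1 : s < 1 := by nlinarith
  rintro ⟨hlo, hhi⟩
  set a := (lam C).toReal with ha_def
  have ha0 : 0 < a := by linarith
  have ha1 : a < 1 := by linarith
  have habε : ε < a * (1 - a) := by nlinarith
  -- X is nonempty
  have hXne : Nonempty X := by
    by_contra h
    haveI := not_nonempty_iff.mp h
    have : C = ∅ := Set.eq_empty_of_isEmpty C
    rw [this] at ha_def
    simp [ha_def] at ha0
  -- every continuous map is integrable
  have hint : ∀ f : C(X, ℝ), Integrable f lam := fun f =>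
    f.continuous.integrable_of_hasCompactSupport (HasCompactSupport.of_compactSpace f)
  -- total mass is 1
  have htot : (lam Set.univ).toReal = 1 := by
    have h1 : φ 1 = (lam Set.univ).toReal := by
      rw [hrep]; simp; rfl
    have hle : (lam Set.univ).toReal ≤ 1 := by
      rw [← h1]
      calc φ 1 ≤ |φ 1| := le_abs_self _
        _ ≤ ‖φ‖ * ‖(1 : C(X, ℝ))‖ := φ.le_opNorm 1
        _ ≤ 1 * 1 := by
            rw [hnorm]
            gcongr
            exact ContinuousMap.norm_le _ zero_le_one |>.mpr fun x => by simp
        _ = 1 := one_mul 1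
    have hge : (1 : ℝ) ≤ (lam Set.univ).toReal := by
      rw [← hnorm]
      refine φ.opNorm_le_bound ENNReal.toReal_nonneg fun f => ?_
      rw [hrep]
      calc ‖∫ x, f x ∂lam‖ ≤ ‖f‖ * (lam Set.univ).toReal :=
            norm_integral_le_of_norm_le_const (Filter.Eventually.of_forall fun x =>
              f.norm_coe_le_norm x)
        _ = (lam Set.univ).toReal * ‖f‖ := mul_comm _ _
    linarith
  set b := 1 - a with hb_def
  have hbC : (lam Cᶜ).toReal = b := by
    have := measure_compl hC (measure_ne_top lam C)
    rw [this, ENNReal.toReal_sub_of_le (measure_mono (Set.subset_univ C))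
      (measure_ne_top lam _), htot, ← ha_def]
  set δ := (a * b - ε) / 2 with hδ_def
  clear_value s a b δ
  have hδ0 : 0 < δ := by rw [hδ_def]; linarith
  have hδa : δ < a := by nlinarith
  have hδb : δ < b := by nlinarith
  -- inner regularity: compact subsets
  obtain ⟨K, hKC, hKcomp, hKm⟩ := hC.exists_isCompact_lt_add (measure_ne_top lam C)
    (ε := ENNReal.ofReal δ) (by simpa using hδ0)
  obtain ⟨K', hK'C, hK'comp, hK'm⟩ := hC.compl.exists_isCompact_lt_add
    (measure_ne_top lam Cᶜ) (ε := ENNReal.ofReal δ) (by simpa using hδ0)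
  have hKr : a - δ < (lam K).toReal := by
    have := ENNReal.toReal_lt_toReal (measure_ne_top lam C)
      (by simp [measure_ne_top lam K]) |>.mpr hKm
    rw [ENNReal.toReal_add (measure_ne_top lam K) ENNReal.ofReal_ne_top,
      ENNReal.toReal_ofReal hδ0.le] at this
    linarith
  have hK'r : b - δ < (lam K').toReal := by
    have := ENNReal.toReal_lt_toReal (measure_ne_top lam Cᶜ)
      (by simp [measure_ne_top lam K']) |>.mpr hK'm
    rw [ENNReal.toReal_add (measure_ne_top lam K') ENNReal.ofReal_ne_top,
      ENNReal.toReal_ofReal hδ0.le, hbC] at this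
    linarith
  have hKne : K.Nonempty := by
    refine nonempty_of_measure_ne_zero (μ := lam) fun h => ?_
    rw [h] at hKr; simp at hKr; linarith
  have hK'ne : K'.Nonempty := by
    refine nonempty_of_measure_ne_zero (μ := lam) fun h => ?_
    rw [h] at hK'r; simp at hK'r; linarith
  have hdisj : Disjoint K K' :=
    Set.disjoint_left.mpr fun x hx hx' => (hK'C hx') (hKC hx)
  -- Urysohn
  obtain ⟨f, hf0, hf1, hf01⟩ := exists_continuous_zero_one_of_isClosed
    hKcomp.isClosed hK'comp.isClosed hdisj
  set g1 : C(X, ℝ) := ⟨fun x => max (1 - 2 * f x) 0, by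
    exact (continuous_const.sub (continuous_const.mul f.continuous)).max continuous_const⟩
    with hg1_def
  set g2 : C(X, ℝ) := ⟨fun x => max (2 * f x - 1) 0, by
    exact ((continuous_const.mul f.continuous).sub continuous_const).max continuous_const⟩
    with hg2_def
  have hg1K : ∀ x ∈ K, g1 x = 1 := fun x hx => by
    simp [hg1_def, hf0 hx, ContinuousMap.coe_mk]
  have hg2K' : ∀ x ∈ K', g2 x = 1 := fun x hx => by
    norm_num [hg2_def, hf1 hx, ContinuousMap.coe_mk]
  have hg1mem : ∀ x, g1 x ∈ Set.Icc (0:ℝ) 1 := fun x => by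
    have := hf01 x
    simp only [Set.mem_Icc] at this ⊢
    constructor
    · exact le_max_right _ _
    · simp only [hg1_def, ContinuousMap.coe_mk, max_le_iff]; constructor <;> linarith
  have hg2mem : ∀ x, g2 x ∈ Set.Icc (0:ℝ) 1 := fun x => by
    have := hf01 x
    simp only [Set.mem_Icc] at this ⊢
    constructor
    · exact le_max_right _ _
    · simp only [hg2_def, ContinuousMap.coe_mk, max_le_iff]; constructor <;> linarith
  have hmul : g1 * g2 = 0 := by
    ext x
    simp only [ContinuousMap.mul_apply, ContinuousMap.zero_apply, hg1_def, hg2_def,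
      ContinuousMap.coe_mk]
    rcases le_total (f x) (1/2) with h | h
    · rw [max_eq_right (by linarith : 2 * f x - 1 ≤ 0), mul_zero]
    · rw [max_eq_right (by linarith : 1 - 2 * f x ≤ 0), zero_mul]
  have hnorm1 : ∀ (g : C(X, ℝ)), (∀ x, g x ∈ Set.Icc (0:ℝ) 1) →
      (∃ x, g x = 1) → ‖g‖ = 1 := by
    intro g hmem ⟨x₀, hx₀⟩
    refine le_antisymm ((ContinuousMap.norm_le _ zero_le_one).mpr fun x => ?_) ?_
    · have := hmem x; rw [Set.mem_Icc] at this
      rw [Real.norm_eq_abs, abs_le]; constructor <;> linarith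
    · calc (1:ℝ) = ‖g x₀‖ := by simp [hx₀]
        _ ≤ ‖g‖ := g.norm_coe_le_norm x₀
  obtain ⟨x₁, hx₁⟩ := hKne
  obtain ⟨x₂, hx₂⟩ := hK'ne
  have hn1 : ‖g1‖ = 1 := hnorm1 g1 hg1mem ⟨x₁, hg1K x₁ hx₁⟩
  have hn2 : ‖g2‖ = 1 := hnorm1 g2 hg2mem ⟨x₂, hg2K' x₂ hx₂⟩
  -- lower bounds on φ g1, φ g2
  have hlow : ∀ (g : C(X, ℝ)), (∀ x, g x ∈ Set.Icc (0:ℝ) 1) → ∀ (T : Set X),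
      IsCompact T → (∀ x ∈ T, g x = 1) → (lam T).toReal ≤ φ g := by
    intro g hmem T hTcomp hT1
    rw [hrep]
    calc (lam T).toReal = ∫ _ in T, (1:ℝ) ∂lam := by
          rw [setIntegral_const]; simp; rfl
      _ ≤ ∫ x in T, g x ∂lam := by
          refine setIntegral_mono_on ((integrableOn_const_iff).mpr (Or.inr
            (measure_lt_top lam T))) ((hint g).integrableOn) hTcomp.isClosed.measurableSet
            fun x hx => ?_
          rw [hT1 x hx]
      _ ≤ ∫ x, g x ∂lam := setIntegral_le_integral (hint g)
          (Filter.Eventually.of_forall fun x => (hmem x).1)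
  have hφ1 : a - δ < φ g1 := lt_of_lt_of_le hKr (hlow g1 hg1mem K hKcomp hg1K)
  have hφ2 : b - δ < φ g2 := lt_of_lt_of_le hK'r (hlow g2 hg2mem K' hK'comp hg2K')
  have hedp := hdp g1 g2 hn1 hn2 hmul
  have h1' : a - δ ≤ |φ g1| := le_trans hφ1.le (le_abs_self _)
  have h2' : b - δ ≤ |φ g2| := le_trans hφ2.le (le_abs_self _)
  have : (a - δ) * (b - δ) ≤ ε :=
    le_trans (mul_le_mul h1' h2' (by linarith) (abs_nonneg _)) hedp
  nlinarith [sq_nonneg δ]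
end

section
/- Let 0 < ε < 2/9 and suppose φ ∈ C(X)' is ε-disjointness preserving with √(9ε/2) < ‖φ‖ ≤ 1. If x ∈ X is the (unique) point with ‖φ − λ({x})δ_x‖ ≤ (‖φ‖ − √(‖φ‖² − 4ε))/2, then √(‖φ‖² − 4ε) ≤ |φ(f)| for every f ∈ C(X) with |f(x)| = 1 = ‖f‖∞. -/
open MeasureTheory Real

set_option synthInstance.maxHeartbeats 1000000 in
set_option maxHeartbeats 2000000 in
theorem stmt6 {X : Type*} [TopologicalSpace X] [CompactSpace X] [T2Space X]
    [MeasurableSpace X] [BorelSpace X]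
    (ε : ℝ) (hε : 0 < ε) (hε' : ε < 2/9)
    (φ : C(X, ℝ) →L[ℝ] ℝ) (hdp : IsEDP ε φ)
    (hlb : sqrt (9*ε/2) < ‖φ‖) (hub : ‖φ‖ ≤ 1)
    (s : SignedMeasure X) (hrep : ∀ f : C(X, ℝ), φ f = sInt s f)
    (x : X)
    (hx : ‖φ - s {x} • ContinuousMap.evalCLM ℝ x‖ ≤
      (‖φ‖ - sqrt (‖φ‖^2 - 4*ε))/2) :
    ∀ f : C(X, ℝ), |f x| = 1 → ‖f‖ = 1 → sqrt (‖φ‖^2 - 4*ε) ≤ |φ f| := by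
  intro f hfx hf
  set c : ℝ := s {x} with hc
  set r : ℝ := (‖φ‖ - sqrt (‖φ‖^2 - 4*ε))/2 with hr
  set ψ : C(X, ℝ) →L[ℝ] ℝ := φ - c • ContinuousMap.evalCLM ℝ x with hψ
  have hδ : ‖(ContinuousMap.evalCLM ℝ x : C(X, ℝ) →L[ℝ] ℝ)‖ ≤ 1 :=
    ContinuousLinearMap.opNorm_le_bound _ zero_le_one
      (fun g => by simpa using g.norm_coe_le_norm x)
  have h1 : |φ f - c * f x| ≤ r := by
    have : |ψ f| ≤ ‖ψ‖ * ‖f‖ := ψ.le_opNorm f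
    have hψf : ψ f = φ f - c * f x := by
      simp [hψ, ContinuousMap.evalCLM]
    rw [hψf] at this
    rw [hf, mul_one] at this
    exact this.trans hx
  have h2 : ‖φ‖ ≤ r + |c| := by
    have : ‖φ‖ = ‖ψ + c • ContinuousMap.evalCLM ℝ x‖ := by
      simp [hψ]
    rw [this]
    calc ‖ψ + c • ContinuousMap.evalCLM ℝ x‖ ≤ ‖ψ‖ + ‖c • (ContinuousMap.evalCLM ℝ x : C(X, ℝ) →L[ℝ] ℝ)‖ :=
          norm_add_le ψ (c • (ContinuousMap.evalCLM ℝ x : C(X, ℝ) →L[ℝ] ℝ))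
      _ ≤ r + |c| * 1 := by
          refine add_le_add hx ?_
          calc ‖c • (ContinuousMap.evalCLM ℝ x : C(X, ℝ) →L[ℝ] ℝ)‖
              ≤ ‖c‖ * ‖(ContinuousMap.evalCLM ℝ x : C(X, ℝ) →L[ℝ] ℝ)‖ := ContinuousLinearMap.opNorm_smul_le _ _
            _ ≤ |c| * 1 := by
                rw [Real.norm_eq_abs]
                exact mul_le_mul_of_nonneg_left hδ (abs_nonneg c)
      _ = r + |c| := by ring
  have h3 : |c| - r ≤ |φ f| := by
    have : |c| = |c * f x| := by rw [abs_mul, hfx, mul_one]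
    rw [this]
    have := abs_sub_abs_le_abs_sub (c * f x) (c * f x - φ f)
    have h4 : |c * f x - (c * f x - φ f)| = |φ f| := by ring_nf
    have h5 : |c * f x - φ f| = |φ f - c * f x| := abs_sub_comm _ _
    calc |c * f x| - r ≤ |c * f x| - |c * f x - φ f| := by
          rw [h5]; linarith
      _ ≤ |c * f x - (c * f x - φ f)| := abs_sub_abs_le_abs_sub _ _
      _ = |φ f| := h4
  have : sqrt (‖φ‖^2 - 4*ε) = ‖φ‖ - 2 * r := by rw [hr]; ring
  linarith
end

section
/- Let 0 < ε < 1/4, let k be an even positive integer, and let X be a finite set of cardinality k. If φ is a norm-one ε-disjointness preserving continuous linear functional on C(X) (i.e., on K^X with sup norm), then there exists x ∈ X with |λ({x})| ≥ (1 + √(1−4ε))/k, where λ is the measure representing φ. -/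
open MeasureTheory Real

theorem stmt7 {X : Type*} [Fintype X] [TopologicalSpace X] [DiscreteTopology X]
    (ε : ℝ) (hε : 0 < ε) (hε' : ε < 1/4)
    (k : ℕ) (hkpos : 0 < k) (hkeven : Even k) (hcard : Fintype.card X = k)
    (a : X → ℝ) (φ : C(X, ℝ) →L[ℝ] ℝ)
    (hφ : ∀ f : C(X, ℝ), φ f = ∑ x : X, a x * f x)
    (hnorm : ‖φ‖ = 1) (hdp : IsEDP ε φ) :
    ∃ x : X, (1 + sqrt (1 - 4*ε))/(k : ℝ) ≤ |a x| := by
  classical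
  obtain ⟨m, hm⟩ := hkeven
  have hmpos : 0 < m := by omega
  set S : ℝ := ∑ x : X, |a x| with hS
  have hSnn : (0:ℝ) ≤ S := Finset.sum_nonneg fun _ _ => abs_nonneg _
  -- ‖φ‖ ≤ S
  have hbound : ‖φ‖ ≤ S := by
    apply ContinuousLinearMap.opNorm_le_bound _ hSnn
    intro g
    rw [hφ]
    calc |∑ x : X, a x * g x| ≤ ∑ x : X, |a x * g x| := Finset.abs_sum_le_sum_abs _ _
      _ ≤ ∑ x : X, |a x| * ‖g‖ := by
          apply Finset.sum_le_sum
          intro x _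
          rw [abs_mul]
          exact mul_le_mul_of_nonneg_left (g.norm_coe_le_norm x) (abs_nonneg _)
      _ = S * ‖g‖ := by rw [← Finset.sum_mul]
  have hS1 : (1:ℝ) ≤ S := hnorm ▸ hbound
  -- choose subset of size m with large sum
  obtain ⟨A₀, _, hA₀card⟩ := Finset.exists_subset_card_eq (s := (Finset.univ : Finset X)) (n := m)
    (by rw [Finset.card_univ, hcard]; omega)
  have hsplit : ∀ B : Finset X, (∑ x ∈ B, |a x|) + (∑ x ∈ Bᶜ, |a x|) = S :=
    fun B => Finset.sum_add_sum_compl B _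
  obtain ⟨A, hAcard, hAbig⟩ : ∃ A : Finset X, A.card = m ∧ S/2 ≤ ∑ x ∈ A, |a x| := by
    by_cases h : S/2 ≤ ∑ x ∈ A₀, |a x|
    · exact ⟨A₀, hA₀card, h⟩
    · refine ⟨A₀ᶜ, ?_, ?_⟩
      · rw [Finset.card_compl, hcard, hA₀card]; omega
      · have := hsplit A₀; push_neg at h; linarith
  have hAcardc : Aᶜ.card = m := by rw [Finset.card_compl, hcard, hAcard]; omega
  have hAne : A.Nonempty := Finset.card_pos.mp (by omega)
  have hAcne : Aᶜ.Nonempty := Finset.card_pos.mp (by omega)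
  -- test functions
  set sg : X → ℝ := fun x => if 0 ≤ a x then 1 else -1 with hsg
  have hsgabs : ∀ x, |sg x| = 1 := by
    intro x; by_cases h : 0 ≤ a x <;> simp [hsg, h]
  have hsgmul : ∀ x, a x * sg x = |a x| := by
    intro x; by_cases h : 0 ≤ a x
    · simp [hsg, h, abs_of_nonneg h]
    · push_neg at h; simp [hsg, not_le.mpr h, abs_of_neg h]
  set f : C(X, ℝ) := ⟨fun x => if x ∈ A then sg x else 0, continuous_of_discreteTopology⟩ with hf
  set g : C(X, ℝ) := ⟨fun x => if x ∈ A then 0 else sg x, continuous_of_discreteTopology⟩ with hg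
  have hnorm_aux : ∀ (h : C(X, ℝ)), (∀ x, |h x| ≤ 1) → (∃ x, |h x| = 1) → ‖h‖ = 1 := by
    intro h hle ⟨x, hx⟩
    refine le_antisymm ((ContinuousMap.norm_le _ zero_le_one).mpr fun y => ?_) ?_
    · simpa using hle y
    · calc (1:ℝ) = ‖h x‖ := by simpa using hx.symm
        _ ≤ ‖h‖ := h.norm_coe_le_norm x
  have hfnorm : ‖f‖ = 1 := by
    apply hnorm_aux
    · intro x; by_cases hx : x ∈ A <;> simp [hf, hx, hsgabs x]
    · obtain ⟨x, hx⟩ := hAne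
      exact ⟨x, by simp [hf, hx, hsgabs x]⟩
  have hgnorm : ‖g‖ = 1 := by
    apply hnorm_aux
    · intro x; by_cases hx : x ∈ A <;> simp [hg, hx, hsgabs x]
    · obtain ⟨x, hx⟩ := hAcne
      exact ⟨x, by simp [hg, Finset.mem_compl.mp hx, hsgabs x]⟩
  have hfg : f * g = 0 := by
    ext x
    by_cases hx : x ∈ A <;> simp [hf, hg, hx]
  have hφf : φ f = ∑ x ∈ A, |a x| := by
    have h1 : ∑ x : X, a x * f x = ∑ x : X, (if x ∈ A then |a x| else 0) :=
      Finset.sum_congr rfl fun x _ => by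
        by_cases hx : x ∈ A <;> simp [hf, hx, hsgmul x]
    rw [hφ, h1, Finset.sum_ite_mem, Finset.univ_inter]
  have hφg : φ g = ∑ x ∈ Aᶜ, |a x| := by
    have h1 : ∑ x : X, a x * g x = ∑ x : X, (if x ∈ Aᶜ then |a x| else 0) :=
      Finset.sum_congr rfl fun x _ => by
        by_cases hx : x ∈ A <;> simp [hg, hx, hsgmul x, Finset.mem_compl]
    rw [hφ, h1, Finset.sum_ite_mem, Finset.univ_inter]
  set SA : ℝ := ∑ x ∈ A, |a x| with hSA
  set SB : ℝ := ∑ x ∈ Aᶜ, |a x| with hSB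
  have hSAnn : 0 ≤ SA := Finset.sum_nonneg fun _ _ => abs_nonneg _
  have hSBnn : 0 ≤ SB := Finset.sum_nonneg fun _ _ => abs_nonneg _
  have hprod : SA * SB ≤ ε := by
    have := hdp f g hfnorm hgnorm hfg
    rwa [hφf, hφg, abs_of_nonneg hSAnn, abs_of_nonneg hSBnn] at this
  have hsum : SA + SB = S := hsplit A
  set r : ℝ := sqrt (1 - 4*ε) with hr
  have hrnn : 0 ≤ r := sqrt_nonneg _
  have hrsq : r^2 = 1 - 4*ε := sq_sqrt (by linarith)
  have hSAge : (1 + r)/2 ≤ SA := by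
    by_contra h
    push_neg at h
    nlinarith [hAbig, hS1, hprod, hsum, hSBnn]
  have hk0 : (0:ℝ) < (k:ℝ) := by exact_mod_cast hkpos
  have hconst : ∑ _x ∈ A, (1 + r)/(k:ℝ) = (1 + r)/2 := by
    rw [Finset.sum_const, hAcard, nsmul_eq_mul]
    have : (k:ℝ) = 2 * (m:ℝ) := by exact_mod_cast hm ▸ (by push_cast; ring : ((m + m : ℕ) : ℝ) = 2 * m)
    rw [this]
    have hm0 : (0:ℝ) < (m:ℝ) := by exact_mod_cast hmpos
    field_simp
  by_contra hcon
  push_neg at hcon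
  have hlt : SA < ∑ _x ∈ A, (1 + r)/(k:ℝ) :=
    Finset.sum_lt_sum_of_nonempty hAne fun x _ => hcon x
  rw [hconst] at hlt
  linarith
end

section
/- Let X be a finite set of odd cardinality k ≥ 3, let x_1, …, x_k enumerate X, and define φ := (1/k) Σ_{i=1}^k δ_{x_i} on C(X). Then ‖φ‖ = 1, φ is ω_k-disjointness preserving where ω_k := (k²−1)/(4k²), and ‖φ − ψ‖ ≥ 1 − 1/k for every weighted evaluation functional ψ = α δ_x (α ∈ K, x ∈ X). -/
open MeasureTheory Real

lemma prod_bound_int (a b k : ℤ) (hk : Odd k) (ha : 0 ≤ a) (hb : 0 ≤ b) (hab : a + b ≤ k) :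
    4*(a*b) ≤ k^2 - 1 := by
  obtain ⟨m, hm⟩ := hk
  have key : 4*(a*b) = (a+b)^2 - (a-b)^2 := by ring
  rcases eq_or_lt_of_le hab with h | h
  · have hne : a - b ≠ 0 := by omega
    have h1 : 1 ≤ |a - b| := Int.one_le_abs hne
    have h2 : 1 ≤ (a-b)^2 := by nlinarith [sq_abs (a-b)]
    have h3 : (a+b)^2 = k^2 := by rw [h]
    linarith
  · have h' : a + b ≤ k - 1 := by omega
    have hk1 : 1 ≤ k := by omega
    have h1 : (a+b)^2 ≤ (k-1)^2 := by nlinarith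
    have h2 : (k-1)^2 ≤ k^2 - 1 := by nlinarith
    nlinarith [sq_nonneg (a-b)]

theorem stmt12 {X : Type*} [Fintype X] [TopologicalSpace X] [DiscreteTopology X]
    (k : ℕ) (hk : Odd k) (hk3 : 3 ≤ k) (e : X ≃ Fin k)
    (φ : C(X, ℝ) →L[ℝ] ℝ)
    (hφ : ∀ f : C(X, ℝ), φ f = (1/(k : ℝ)) * ∑ x : X, f x) :
    ‖φ‖ = 1 ∧ IsEDP (((k:ℝ)^2 - 1)/(4*(k:ℝ)^2)) φ ∧
    ∀ (α : ℝ) (x : X), 1 - 1/(k : ℝ) ≤ ‖φ - α • ContinuousMap.evalCLM ℝ x‖ := by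
  classical
  have hcard : Fintype.card X = k := by
    rw [← Fintype.card_fin k]; exact Fintype.card_congr e
  have hkpos : (0:ℝ) < (k:ℝ) := by
    have : 0 < k := by omega
    exact_mod_cast this
  have hne : Nonempty X := by
    rw [← Fintype.card_pos_iff, hcard]; omega
  -- a generic bound: |∑ f| ≤ (support card) * ‖f‖, here specialized
  have hsum : ∀ f : C(X, ℝ), ‖f‖ ≤ 1 →
      |∑ x : X, f x| ≤ (Finset.univ.filter (fun x => f x ≠ 0)).card := by
    intro f hf
    have h1 : ∑ x : X, f x = ∑ x ∈ Finset.univ.filter (fun x => f x ≠ 0), f x :=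
      (Finset.sum_filter_ne_zero _).symm
    rw [h1]
    calc |∑ x ∈ Finset.univ.filter (fun x => f x ≠ 0), f x|
        ≤ ∑ x ∈ Finset.univ.filter (fun x => f x ≠ 0), |f x| :=
          Finset.abs_sum_le_sum_abs _ _
      _ ≤ ∑ _x ∈ Finset.univ.filter (fun x => f x ≠ 0), (1:ℝ) := by
          refine Finset.sum_le_sum fun x _ => ?_
          calc |f x| = ‖f x‖ := rfl
            _ ≤ ‖f‖ := f.norm_coe_le_norm x
            _ ≤ 1 := hf
      _ = (Finset.univ.filter (fun x => f x ≠ 0)).card := by simp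
  refine ⟨?_, ?_, ?_⟩
  · -- norm = 1
    apply le_antisymm
    · apply ContinuousLinearMap.opNorm_le_bound _ zero_le_one
      intro f
      rw [hφ]
      have h1 : |∑ x : X, f x| ≤ (k:ℝ) * ‖f‖ := by
        calc |∑ x : X, f x| ≤ ∑ x : X, |f x| := Finset.abs_sum_le_sum_abs _ _
          _ ≤ ∑ _x : X, ‖f‖ := Finset.sum_le_sum fun x _ => f.norm_coe_le_norm x
          _ = (k:ℝ) * ‖f‖ := by
              rw [Finset.sum_const, Finset.card_univ, hcard, nsmul_eq_mul]
      have : ‖1/(k:ℝ) * ∑ x : X, f x‖ = (1/(k:ℝ)) * |∑ x : X, f x| := by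
        rw [Real.norm_eq_abs, abs_mul, abs_of_pos (by positivity)]
      rw [this]
      calc (1/(k:ℝ)) * |∑ x : X, f x| ≤ (1/(k:ℝ)) * ((k:ℝ) * ‖f‖) := by
            apply mul_le_mul_of_nonneg_left h1 (by positivity)
        _ = ‖f‖ := by field_simp
        _ = 1 * ‖f‖ := (one_mul _).symm
    · have h1 : φ (1 : C(X, ℝ)) = 1 := by
        rw [hφ]
        simp [hcard]
        field_simp
      have h2 : ‖(1 : C(X, ℝ))‖ = 1 := norm_one
      have := φ.le_opNorm (1 : C(X, ℝ))
      rw [h1, h2, mul_one] at this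
      simpa using this
  · -- IsEDP
    intro f g hf hg hfg
    have hpt : ∀ x, f x * g x = 0 := by
      intro x
      have := congrArg (fun h : C(X,ℝ) => h x) hfg
      simpa using this
    set A := Finset.univ.filter (fun x => f x ≠ 0) with hA
    set B := Finset.univ.filter (fun x => g x ≠ 0) with hB
    have hd : Disjoint A B := by
      rw [Finset.disjoint_left]
      intro x hx hx'
      simp [hA, hB] at hx hx'
      exact hx' (by
        have := hpt x
        rcases mul_eq_zero.mp this with h | h
        · exact absurd h hx
        · exact h)
    have hAB : A.card + B.card ≤ k := by
      have := Finset.card_union_of_disjoint hd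
      have h2 : (A ∪ B).card ≤ Fintype.card X := Finset.card_le_univ _
      omega
    have hfb : |φ f| ≤ 1/(k:ℝ) * A.card := by
      rw [hφ, abs_mul, abs_of_pos (show (0:ℝ) < 1/(k:ℝ) by positivity)]
      exact mul_le_mul_of_nonneg_left (hsum f hf.le) (by positivity)
    have hgb : |φ g| ≤ 1/(k:ℝ) * B.card := by
      rw [hφ, abs_mul, abs_of_pos (show (0:ℝ) < 1/(k:ℝ) by positivity)]
      exact mul_le_mul_of_nonneg_left (hsum g hg.le) (by positivity)
    have hint : (4:ℝ) * ((A.card:ℝ) * B.card) ≤ (k:ℝ)^2 - 1 := by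
      have := prod_bound_int A.card B.card k (by exact_mod_cast hk)
        (by positivity) (by positivity) (by exact_mod_cast hAB)
      exact_mod_cast this
    calc |φ f| * |φ g| ≤ (1/(k:ℝ) * A.card) * (1/(k:ℝ) * B.card) :=
          mul_le_mul hfb hgb (abs_nonneg _) (by positivity)
      _ = ((A.card:ℝ) * B.card) / (k:ℝ)^2 := by
          field_simp
          try tauto
      _ ≤ ((k:ℝ)^2 - 1)/(4*(k:ℝ)^2) := by
          rw [div_le_div_iff₀ (by positivity) (by positivity)]
          nlinarith
  · -- distance to weighted evaluations
    intro α x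
    set f : C(X, ℝ) := ⟨fun y => if y = x then 0 else 1, continuous_of_discreteTopology⟩ with hfdef
    have hfx : f x = 0 := by simp [hfdef]
    have hfn : ‖f‖ ≤ 1 := by
      apply (ContinuousMap.norm_le _ zero_le_one).mpr
      intro y
      simp only [hfdef, ContinuousMap.coe_mk, Real.norm_eq_abs]
      split <;> norm_num
    have hsumf : ∑ y : X, f y = (k:ℝ) - 1 := by
      simp only [hfdef, ContinuousMap.coe_mk]
      rw [Finset.sum_ite]
      simp only [Finset.sum_const_zero, Finset.sum_const, nsmul_eq_mul, mul_one, zero_add]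
      have hfe : (Finset.univ.filter (fun y : X => y = x)) = {x} := by
        ext y; simp
      have : (Finset.univ.filter (fun y : X => ¬ y = x)).card = k - 1 := by
        rw [Finset.filter_not, Finset.card_sdiff_of_subset (Finset.filter_subset _ _), hfe]
        simp [hcard]
      rw [this]
      have : (1:ℕ) ≤ k := by omega
      push_cast [Nat.cast_sub this]
      ring
    set ψ : C(X, ℝ) →L[ℝ] ℝ := φ - α • ContinuousMap.evalCLM ℝ x with hψ
    have heval : (ContinuousMap.evalCLM ℝ x) f = f x := rfl
    have hval : ψ f = 1 - 1/(k:ℝ) := by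
      rw [hψ, ContinuousLinearMap.sub_apply, ContinuousLinearMap.smul_apply, heval, hfx,
        smul_zero, sub_zero, hφ, hsumf]
      field_simp
    have h1 := ψ.le_opNorm f
    rw [hval] at h1
    calc (1:ℝ) - 1/(k:ℝ) ≤ ‖(1 - 1/(k:ℝ) : ℝ)‖ := le_abs_self _
      _ ≤ ‖ψ‖ * ‖f‖ := h1
      _ ≤ ‖ψ‖ * 1 := mul_le_mul_of_nonneg_left hfn (norm_nonneg ψ)
      _ = ‖ψ‖ := mul_one _
end

section
/- Let 0 < ε < 1/4 and let X be a compact Hausdorff space with at least 2n points, where n ∈ ℕ satisfies ω_{2n−1} ≤ ε < ω_{2n+1} and ω_m := (m²−1)/(4m²). Pick 2n distinct points x_1, …, x_{2n} ∈ X and define φ := ((1+√(1−4ε))/(2n)) Σ_{i=1}^{2n−1} δ_{x_i} + ((1−(2n−1)√(1−4ε))/(2n)) δ_{x_{2n}}. Then ‖φ‖ = 1, φ is ε-disjointness preserving, and ‖φ − ψ‖ ≥ (2n−1−√(1−4ε))/(2n) for every weighted evaluation functional ψ = α δ_x. -/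
open MeasureTheory Real

lemma aux_prod13 (ε s t u v : ℝ) (hs0 : 0 ≤ s) (hs2 : s^2 = 1 - 4*ε)
    (ht : s ≤ |2*t - 1|) (hu0 : 0 ≤ u) (hv0 : 0 ≤ v)
    (hu : u ≤ t) (hv : v ≤ 1 - t) : u * v ≤ ε := by
  have h1 : u * v ≤ t * (1 - t) := mul_le_mul hu hv hv0 (le_trans hu0 hu)
  have h2 : s^2 ≤ (2*t-1)^2 := by
    rw [← sq_abs (2*t-1)]
    exact pow_le_pow_left₀ hs0 ht 2
  nlinarith

set_option maxHeartbeats 4000000 in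
theorem stmt13 {X : Type*} [TopologicalSpace X] [CompactSpace X] [T2Space X]
    (ε : ℝ) (hε : 0 < ε) (hε' : ε < 1/4)
    (n : ℕ) (hn : 0 < n)
    (hω₁ : ((2*(n:ℝ) - 1)^2 - 1)/(4*(2*(n:ℝ) - 1)^2) ≤ ε)
    (hω₂ : ε < ((2*(n:ℝ) + 1)^2 - 1)/(4*(2*(n:ℝ) + 1)^2))
    (x : Fin (2*n) ↪ X)
    (φ : C(X, ℝ) →L[ℝ] ℝ)
    (hφ : ∀ f : C(X, ℝ), φ f =
      ((1 + sqrt (1 - 4*ε))/(2*(n:ℝ))) *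
        (∑ i : Fin (2*n - 1), f (x (Fin.castLE (by omega) i))) +
      ((1 - (2*(n:ℝ) - 1) * sqrt (1 - 4*ε))/(2*(n:ℝ))) *
        f (x ⟨2*n - 1, by omega⟩)) :
    ‖φ‖ = 1 ∧ IsEDP ε φ ∧
    ∀ (α : ℝ) (y : X),
      (2*(n:ℝ) - 1 - sqrt (1 - 4*ε))/(2*(n:ℝ)) ≤
        ‖φ - α • ContinuousMap.evalCLM ℝ y‖ := by
  classical
  have h4 : (0:ℝ) < 1 - 4*ε := by linarith
  set s := sqrt (1 - 4*ε) with hs_def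
  have hs0 : 0 ≤ s := sqrt_nonneg _
  have hs2 : s^2 = 1 - 4*ε := sq_sqrt h4.le
  set N := (n:ℝ) with hN_def
  have hN : (1:ℝ) ≤ N := by rw [hN_def]; exact_mod_cast hn
  have hN0 : (0:ℝ) < 2*N := by linarith
  have h2n1 : (0:ℝ) < 2*N - 1 := by linarith
  have key : (2*N - 1) * s ≤ 1 := by
    have h1 : ((2*N-1)^2 - 1) ≤ ε * (4*(2*N-1)^2) := by
      rw [div_le_iff₀ (by positivity)] at hω₁
      linarith
    have h2 : ((2*N-1)*s)^2 ≤ 1 := by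
      rw [mul_pow, hs2]; nlinarith
    nlinarith [mul_nonneg h2n1.le hs0]
  set a := (1 + s)/(2*N) with ha_def
  set b := (1 - (2*N-1)*s)/(2*N) with hb_def
  have ha' : 2*N*a = 1 + s := by rw [ha_def]; field_simp
  have hb' : 2*N*b = 1 - (2*N-1)*s := by rw [hb_def]; field_simp
  have ha0 : 0 ≤ a := by apply div_nonneg <;> linarith
  have hb0 : 0 ≤ b := by apply div_nonneg <;> linarith
  have hab : (2*N - 1)*a + b = 1 := by
    rw [ha_def, hb_def]; field_simp; ring
  have hba : b ≤ a := by nlinarith [ha', hb', mul_nonneg hN0.le hs0]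
  set m := 2*n - 1 with hm_def
  have hm : ((m : ℕ) : ℝ) = 2*N - 1 := by
    have h : m + 1 = 2*n := by omega
    have := congrArg (fun t : ℕ => (t:ℝ)) h
    push_cast at this; linarith
  have hm2 : ((m - 1 : ℕ) : ℝ) = 2*N - 2 := by
    have h : (m - 1) + 2 = 2*n := by omega
    have := congrArg (fun t : ℕ => (t:ℝ)) h
    push_cast at this; linarith
  let x' : Fin m → X := fun i => x (Fin.castLE (by omega) i)
  let xl : X := x ⟨2*n - 1, by omega⟩
  have hφ' : ∀ f : C(X, ℝ), φ f = a * (∑ i : Fin m, f (x' i)) + b * f xl := hφ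
  clear_value s N a b
  have hx'inj : Function.Injective x' := by
    intro i j hij
    have := x.injective hij
    have := congrArg Fin.val this
    simp only [Fin.coe_castLE] at this
    exact Fin.ext this
  have hx'l : ∀ i : Fin m, x' i ≠ xl := by
    intro i h
    have := x.injective h
    have := congrArg Fin.val this
    simp only [Fin.coe_castLE] at this
    omega
  -- Norm bound
  have hub : ∀ f : C(X, ℝ), |φ f| ≤ ‖f‖ := by
    intro f
    have hS : |∑ i : Fin m, f (x' i)| ≤ (2*N-1) * ‖f‖ := by
      refine le_trans (Finset.abs_sum_le_sum_abs _ _) ?_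
      calc ∑ i : Fin m, |f (x' i)| ≤ ∑ _i : Fin m, ‖f‖ :=
            Finset.sum_le_sum fun i _ => by
              rw [← Real.norm_eq_abs]; exact f.norm_coe_le_norm _
        _ = (2*N-1)*‖f‖ := by
            rw [Finset.sum_const, Finset.card_univ, Fintype.card_fin, nsmul_eq_mul, hm]
    have hl : |f xl| ≤ ‖f‖ := by
      rw [← Real.norm_eq_abs]; exact f.norm_coe_le_norm _
    rw [hφ' f]
    calc |a * (∑ i : Fin m, f (x' i)) + b * f xl|
        ≤ |a * (∑ i : Fin m, f (x' i))| + |b * f xl| := abs_add_le _ _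
      _ = a * |∑ i : Fin m, f (x' i)| + b * |f xl| := by
          rw [abs_mul, abs_mul, abs_of_nonneg ha0, abs_of_nonneg hb0]
      _ ≤ a * ((2*N-1)*‖f‖) + b * ‖f‖ := by
          exact add_le_add (mul_le_mul_of_nonneg_left hS ha0)
            (mul_le_mul_of_nonneg_left hl hb0)
      _ = ((2*N-1)*a + b) * ‖f‖ := by ring
      _ = ‖f‖ := by rw [hab, one_mul]
  have hnorm : ‖φ‖ = 1 := by
    haveI hNE : Nonempty X := ⟨x ⟨0, by omega⟩⟩
    have h1 : φ (1 : C(X, ℝ)) = 1 := by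
      rw [hφ' 1]
      simp only [ContinuousMap.one_apply]
      rw [Finset.sum_const, Finset.card_univ, Fintype.card_fin, nsmul_eq_mul, mul_one, hm]
      linear_combination hab
    have hle : ‖φ‖ ≤ 1 := by
      refine φ.opNorm_le_bound zero_le_one fun f => ?_
      rw [Real.norm_eq_abs, one_mul]; exact hub f
    have hge : 1 ≤ ‖φ‖ := by
      have h2 := φ.le_opNorm (1 : C(X, ℝ))
      rw [h1] at h2
      simp only [norm_one, mul_one] at h2
      exact h2
    linarith
  refine ⟨hnorm, ?_, ?_⟩
  · -- IsEDP
    intro f g hf hg hfg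
    have hfg' : ∀ p : X, f p * g p = 0 := by
      intro p
      have := congrFun (congrArg DFunLike.coe hfg) p
      simpa using this
    have hfb : ∀ p : X, |f p| ≤ 1 := by
      intro p; rw [← hf, ← Real.norm_eq_abs]; exact f.norm_coe_le_norm p
    have hgb : ∀ p : X, |g p| ≤ 1 := by
      intro p; rw [← hg, ← Real.norm_eq_abs]; exact g.norm_coe_le_norm p
    set k := (Finset.univ.filter (fun i : Fin m => f (x' i) ≠ 0)).card with hk_def
    have hkm : (k:ℝ) ≤ 2*N - 1 := by
      have h1 : k ≤ m := le_trans (Finset.card_filter_le _ _)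
        (by rw [Finset.card_univ, Fintype.card_fin])
      calc (k:ℝ) ≤ (m:ℝ) := by exact_mod_cast h1
        _ = 2*N - 1 := hm
    have hk0 : (0:ℝ) ≤ (k:ℝ) := Nat.cast_nonneg k
    have hSf : |∑ i : Fin m, f (x' i)| ≤ (k:ℝ) := by
      refine le_trans (Finset.abs_sum_le_sum_abs _ _) ?_
      have hpt : ∀ i ∈ Finset.univ, |f (x' i)| ≤ (if f (x' i) ≠ 0 then (1:ℝ) else 0) := by
        intro i _
        by_cases h : f (x' i) = 0
        · simp [h]
        · simp only [h, ne_eq, not_false_eq_true, if_true]; exact hfb _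
      refine le_trans (Finset.sum_le_sum hpt) ?_
      rw [Finset.sum_boole]
    have hSg : |∑ i : Fin m, g (x' i)| ≤ (2*N-1) - (k:ℝ) := by
      refine le_trans (Finset.abs_sum_le_sum_abs _ _) ?_
      have hpt : ∀ i ∈ Finset.univ,
          |g (x' i)| ≤ 1 - (if f (x' i) ≠ 0 then (1:ℝ) else 0) := by
        intro i _
        by_cases h : f (x' i) = 0
        · simp only [h, ne_eq, not_true_eq_false, if_false, sub_zero]; exact hgb _
        · have hg0 : g (x' i) = 0 := by
            rcases mul_eq_zero.mp (hfg' (x' i)) with h' | h'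
            · exact absurd h' h
            · exact h'
          simp [h, hg0]
      refine le_trans (Finset.sum_le_sum hpt) ?_
      rw [Finset.sum_sub_distrib, Finset.sum_boole, Finset.sum_const, Finset.card_univ,
        Fintype.card_fin, nsmul_eq_mul, mul_one, hm]
    rcases mul_eq_zero.mp (hfg' xl) with hfl | hgl
    · -- f xl = 0, t = k*a
      have h1 : |φ f| ≤ (k:ℝ)*a := by
        rw [hφ' f, hfl, mul_zero, add_zero, abs_mul, abs_of_nonneg ha0]
        calc a * |∑ i : Fin m, f (x' i)| ≤ a * (k:ℝ) :=
              mul_le_mul_of_nonneg_left hSf ha0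
          _ = (k:ℝ)*a := by ring
      have h2 : |φ g| ≤ 1 - (k:ℝ)*a := by
        rw [hφ' g]
        calc |a * (∑ i : Fin m, g (x' i)) + b * g xl|
            ≤ a * |∑ i : Fin m, g (x' i)| + b * |g xl| := by
              refine le_trans (abs_add_le _ _) ?_
              rw [abs_mul, abs_mul, abs_of_nonneg ha0, abs_of_nonneg hb0]
          _ ≤ a * ((2*N-1) - (k:ℝ)) + b * 1 :=
              add_le_add (mul_le_mul_of_nonneg_left hSg ha0)
                (mul_le_mul_of_nonneg_left (hgb _) hb0)
          _ = 1 - (k:ℝ)*a := by linear_combination hab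
      refine aux_prod13 ε s ((k:ℝ)*a) _ _ hs0 hs2 ?_ (abs_nonneg _) (abs_nonneg _) h1 h2
      have hka : 2*N*((k:ℝ)*a) = (k:ℝ)*(1+s) := by linear_combination (k:ℝ) * ha'
      rcases lt_or_ge k n with hc | hc
      · have hK : (k:ℝ) + 1 ≤ N := by rw [hN_def]; exact_mod_cast (show k + 1 ≤ n from hc)
        refine le_abs.mpr (Or.inr ?_)
        have hh : 2*N*s ≤ 2*N*(-(2*((k:ℝ)*a) - 1)) := by
          nlinarith [hka, key, mul_nonneg (show (0:ℝ) ≤ N - 1 - (k:ℝ) by linarith)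
            (show (0:ℝ) ≤ 1 + s by linarith)]
        exact (mul_le_mul_iff_right₀ hN0).mp hh
      · have hK : N ≤ (k:ℝ) := by rw [hN_def]; exact_mod_cast hc
        refine le_abs.mpr (Or.inl ?_)
        have hh : 2*N*s ≤ 2*N*(2*((k:ℝ)*a) - 1) := by
          nlinarith [hka, mul_nonneg (show (0:ℝ) ≤ (k:ℝ) - N by linarith)
            (show (0:ℝ) ≤ 1 + s by linarith)]
        exact (mul_le_mul_iff_right₀ hN0).mp hh
    · -- g xl = 0, t = k*a + b
      have h1 : |φ f| ≤ (k:ℝ)*a + b := by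
        rw [hφ' f]
        calc |a * (∑ i : Fin m, f (x' i)) + b * f xl|
            ≤ a * |∑ i : Fin m, f (x' i)| + b * |f xl| := by
              refine le_trans (abs_add_le _ _) ?_
              rw [abs_mul, abs_mul, abs_of_nonneg ha0, abs_of_nonneg hb0]
          _ ≤ a * (k:ℝ) + b * 1 :=
              add_le_add (mul_le_mul_of_nonneg_left hSf ha0)
                (mul_le_mul_of_nonneg_left (hfb _) hb0)
          _ = (k:ℝ)*a + b := by ring
      have h2 : |φ g| ≤ 1 - ((k:ℝ)*a + b) := by
        rw [hφ' g, hgl, mul_zero, add_zero, abs_mul, abs_of_nonneg ha0]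
        calc a * |∑ i : Fin m, g (x' i)| ≤ a * ((2*N-1) - (k:ℝ)) :=
              mul_le_mul_of_nonneg_left hSg ha0
          _ = 1 - ((k:ℝ)*a + b) := by linear_combination hab
      refine aux_prod13 ε s ((k:ℝ)*a + b) _ _ hs0 hs2 ?_ (abs_nonneg _) (abs_nonneg _) h1 h2
      have hka : 2*N*((k:ℝ)*a + b) = (k:ℝ)*(1+s) + (1 - (2*N-1)*s) := by
        linear_combination (k:ℝ) * ha' + hb'
      rcases lt_or_ge k n with hc | hc
      · have hK : (k:ℝ) + 1 ≤ N := by rw [hN_def]; exact_mod_cast (show k + 1 ≤ n from hc)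
        refine le_abs.mpr (Or.inr ?_)
        have hh : 2*N*s ≤ 2*N*(-(2*((k:ℝ)*a + b) - 1)) := by
          nlinarith [hka, mul_nonneg (show (0:ℝ) ≤ N - 1 - (k:ℝ) by linarith)
            (show (0:ℝ) ≤ 1 + s by linarith)]
        exact (mul_le_mul_iff_right₀ hN0).mp hh
      · have hK : N ≤ (k:ℝ) := by rw [hN_def]; exact_mod_cast hc
        refine le_abs.mpr (Or.inl ?_)
        have hh : 2*N*s ≤ 2*N*(2*((k:ℝ)*a + b) - 1) := by
          nlinarith [hka, key, mul_nonneg (show (0:ℝ) ≤ (k:ℝ) - N by linarith)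
            (show (0:ℝ) ≤ 1 + s by linarith)]
        exact (mul_le_mul_iff_right₀ hN0).mp hh
  · -- distance to weighted evaluation functionals
    intro α y
    have htg : (2*N - 1 - s)/(2*N) = 1 - a := by
      rw [ha_def]; field_simp; ring
    obtain ⟨f, hf0, hf1, hf01⟩ := exists_continuous_zero_one_of_isClosed
      (s := {y}) (t := Set.range x \ {y})
      isClosed_singleton
      (((Set.finite_range x).subset Set.diff_subset).isClosed)
      (by
        rw [Set.disjoint_left]
        rintro p hp hq
        rw [Set.mem_singleton_iff] at hp
        exact hq.2 hp)
    have hfy : f y = 0 := hf0 rfl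
    have hfx : ∀ j : Fin (2*n), x j ≠ y → f (x j) = 1 := fun j hj =>
      hf1 ⟨Set.mem_range_self j, by simpa using hj⟩
    have hfnn : ∀ p : X, 0 ≤ f p := fun p => (hf01 p).1
    have hf_le : ‖f‖ ≤ 1 := by
      refine (ContinuousMap.norm_le f zero_le_one).mpr fun p => ?_
      rw [Real.norm_eq_abs, abs_le]
      exact ⟨by linarith [(hf01 p).1], (hf01 p).2⟩
    set ψ : C(X,ℝ) →L[ℝ] ℝ := φ - α • ContinuousMap.evalCLM ℝ y with hψ
    have happ : ψ f = φ f := by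
      rw [hψ, ContinuousLinearMap.sub_apply, ContinuousLinearMap.smul_apply]
      have hev : (ContinuousMap.evalCLM ℝ y) f = f y := rfl
      rw [hev, hfy, smul_zero, sub_zero]
    have htarget : (2*N - 1 - s)/(2*N) ≤ φ f := by
      rw [htg, hφ' f]
      by_cases hyl : xl = y
      · have hall : ∀ i : Fin m, f (x' i) = 1 := by
          intro i
          apply hfx
          intro hxy
          exact hx'l i (hxy.trans hyl.symm)
        have hsum : ∑ i : Fin m, f (x' i) = 2*N - 1 := by
          rw [Finset.sum_congr rfl fun i _ => hall i, Finset.sum_const,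
            Finset.card_univ, Fintype.card_fin, nsmul_eq_mul, mul_one, hm]
        have hfxl : f xl = 0 := by rw [hyl]; exact hfy
        rw [hsum, hfxl, mul_zero, add_zero]
        nlinarith [hab, hba]
      · have hfxl : f xl = 1 := hfx _ hyl
        rw [hfxl, mul_one]
        by_cases hyj : ∃ j : Fin m, x' j = y
        · obtain ⟨j, hj⟩ := hyj
          have hsum : 2*N - 2 ≤ ∑ i : Fin m, f (x' i) := by
            have hsub : ∑ i ∈ Finset.univ.erase j, f (x' i) ≤ ∑ i : Fin m, f (x' i) :=
              Finset.sum_le_sum_of_subset_of_nonneg (Finset.subset_univ _)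
                (fun i _ _ => hfnn _)
            have heq : ∑ i ∈ Finset.univ.erase j, f (x' i)
                = ((Finset.univ.erase j).card : ℝ) := by
              rw [Finset.sum_congr rfl (fun i hi => ?_), Finset.sum_const, nsmul_eq_mul, mul_one]
              apply hfx
              intro hxy
              exact (Finset.ne_of_mem_erase hi) (hx'inj (hxy.trans hj.symm))
            rw [heq, Finset.card_erase_of_mem (Finset.mem_univ j), Finset.card_univ,
              Fintype.card_fin] at hsub
            rw [hm2] at hsub
            linarith
          nlinarith [mul_le_mul_of_nonneg_left hsum ha0, hab, ha0]
        · push_neg at hyj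
          have hall : ∀ i : Fin m, f (x' i) = 1 := fun i => hfx _ (hyj i)
          have hsum : ∑ i : Fin m, f (x' i) = 2*N - 1 := by
            rw [Finset.sum_congr rfl fun i _ => hall i, Finset.sum_const,
              Finset.card_univ, Fintype.card_fin, nsmul_eq_mul, mul_one, hm]
          rw [hsum]
          nlinarith [hab, ha0]
    have h1 := ψ.le_opNorm f
    rw [happ] at h1
    have h2 : φ f ≤ ‖ψ‖ := by
      calc φ f ≤ ‖φ f‖ := le_abs_self _
        _ ≤ ‖ψ‖ * ‖f‖ := h1
        _ ≤ ‖ψ‖ * 1 := mul_le_mul_of_nonneg_left hf_le ψ.opNorm_nonneg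
        _ = ‖ψ‖ := mul_one _
    linarith
end

section
/- Let 0 < ε < 1/4 and let n ≥ 2 be an integer with n ≠ 2. Define γ(t) := t − √(t² − 4ε) and η(t) := t − (t + √(t² − 4ε))/n on [2√ε, 1]. Then min(γ(t), η(t)) ≤ η(2√ε) = 2(n−1)√ε / n for all t ∈ [2√ε, 1]. -/
open Real

private lemma le_sqrt_aux {x y : ℝ} (hy : 0 ≤ y) (h : y ^ 2 ≤ x) :
    y ≤ Real.sqrt x := by
  calc y = Real.sqrt (y ^ 2) := (Real.sqrt_sq hy).symm
    _ ≤ Real.sqrt x := Real.sqrt_le_sqrt h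

theorem stmt14 (ε : ℝ) (hε : 0 < ε) (hε' : ε < 1/4)
    (n : ℕ) (hn : 2 ≤ n) (hn2 : n ≠ 2) :
    (2 * sqrt ε - (2 * sqrt ε + sqrt ((2 * sqrt ε)^2 - 4*ε))/(n : ℝ) =
      2 * ((n : ℝ) - 1) * sqrt ε / (n : ℝ)) ∧
    ∀ t ∈ Set.Icc (2 * sqrt ε) 1,
      min (t - sqrt (t^2 - 4*ε)) (t - (t + sqrt (t^2 - 4*ε))/(n : ℝ)) ≤
        2 * ((n : ℝ) - 1) * sqrt ε / (n : ℝ) := by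
  have hn3 : 3 ≤ n := by omega
  set N : ℝ := (n : ℝ) with hNdef
  have hN : (3 : ℝ) ≤ N := by rw [hNdef]; exact_mod_cast hn3
  have hNpos : (0 : ℝ) < N := by linarith
  set a : ℝ := Real.sqrt ε with hadef
  have ha0 : 0 < a := Real.sqrt_pos.mpr hε
  have ha : a ^ 2 = ε := Real.sq_sqrt hε.le
  constructor
  · have h0 : (2 * a) ^ 2 - 4 * ε = 0 := by nlinarith
    rw [h0, Real.sqrt_zero]
    field_simp
    ring
  · intro t ht
    have hu : 0 ≤ t - 2 * a := by linarith [ht.1]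
    have ht2 : t ^ 2 - 4 * ε = (t - 2 * a) * (t - 2 * a) + 4 * a * (t - 2 * a) := by
      nlinarith
    have ht2' : 0 ≤ t ^ 2 - 4 * ε := by nlinarith [mul_nonneg hu hu, mul_nonneg ha0.le hu]
    set s : ℝ := Real.sqrt (t ^ 2 - 4 * ε) with hsdef
    have hs0 : 0 ≤ s := Real.sqrt_nonneg _
    have hs2 : s ^ 2 = t ^ 2 - 4 * ε := Real.sq_sqrt ht2'
    by_cases hc : (t - 2 * a) * (N * (N - 2)) ≤ 2 * a
    · -- η(t) ≤ B :  s ≥ (N-1)(t - 2a)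
      apply min_le_of_right_le
      have hkey : (N - 1) * (t - 2 * a) ≤ s := by
        apply le_sqrt_aux (by nlinarith)
        nlinarith [mul_le_mul_of_nonneg_left hc hu, mul_nonneg ha0.le hu,
          mul_nonneg hu hu]
      rw [sub_le_iff_le_add, ← add_div, le_div_iff₀ hNpos]
      linarith
    · -- γ(t) ≤ B :  s·N ≥ t·N - 2(N-1)a
      apply min_le_of_left_le
      push_neg at hc
      have hsN : s * N = Real.sqrt ((t ^ 2 - 4 * ε) * N ^ 2) := by
        rw [Real.sqrt_mul ht2', Real.sqrt_sq hNpos.le]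
      have hkey : t * N - 2 * (N - 1) * a ≤ s * N := by
        rw [hsN]
        apply le_sqrt_aux (by nlinarith)
        nlinarith [mul_nonneg hu hNpos.le, mul_nonneg ha0.le (mul_nonneg hu hNpos.le),
          mul_pos ha0 ha0]
      rw [le_div_iff₀ hNpos]
      nlinarith
end
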